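/- arXiv:1108.3208 — 2 statements merged into one kernel-verified Lean document; each statement's English description precedes it below -/
import Mathlib

section
/- Let X be a Banach *-algebra and J a closed *-ideal of X such that X and J both have the Wiener property. If X has spectral synthesis, then J and X/J both have spectral synthesis. -/
/-!
Common definitions for formalizing "Spectral synthesis for the operator space
projective tensor product of C*-algebras" (Jain–Kumar).
-/

noncomputable section

open scoped TensorProduct
open Topology Filter

/-- The operator norm of a (rectangular) complex scalar matrix, viewed as an operator
between the corresponding Euclidean (ℓ²) spaces. -/
noncomputable def matOpNormC {m n : Type} [Fintype m] [Fintype n] (γ : Matrix m n ℂ) : ℝ :=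
  sSup {r | ∃ x : n → ℂ, (∑ j, ‖x j‖ ^ 2) ≤ 1 ∧ r = Real.sqrt (∑ i, ‖∑ j, γ i j * x j‖ ^ 2)}

/-- An (abstract) operator space structure on a complex normed space `V`:
a family of matrix norms on the square matrix levels `Mₙ(V)` satisfying Ruan's axioms
and extending the norm of `V` at the first level. -/
structure OperatorSpaceStructure (V : Type) [NormedAddCommGroup V] [NormedSpace ℂ V] where
  matNorm : ∀ {p : ℕ}, Matrix (Fin p) (Fin p) V → ℝ
  matNorm_one : ∀ v : Matrix (Fin 1) (Fin 1) V, matNorm v = ‖v 0 0‖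
  matNorm_add_le : ∀ {p : ℕ} (v w : Matrix (Fin p) (Fin p) V),
    matNorm (v + w) ≤ matNorm v + matNorm w
  matNorm_smul : ∀ {p : ℕ} (c : ℂ) (v : Matrix (Fin p) (Fin p) V),
    matNorm (c • v) = ‖c‖ * matNorm v
  matNorm_eq_zero_iff : ∀ {p : ℕ} (v : Matrix (Fin p) (Fin p) V), matNorm v = 0 ↔ v = 0
  /-- Ruan's axiom: `‖γ v δ‖ ≤ ‖γ‖ ‖v‖ ‖δ‖` for scalar matrices `γ, δ`. -/
  matNorm_comp_le : ∀ {p q : ℕ} (γ : Matrix (Fin q) (Fin p) ℂ) (v : Matrix (Fin p) (Fin p) V)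
    (δ : Matrix (Fin p) (Fin q) ℂ),
    matNorm (Matrix.of fun i j => ∑ k, ∑ l, (γ i k * δ l j) • v k l) ≤
      matOpNormC γ * matNorm v * matOpNormC δ
  /-- Ruan's axiom: the norm of a direct sum is the maximum of the norms. -/
  matNorm_dirSum : ∀ {p q : ℕ} (v : Matrix (Fin p) (Fin p) V) (w : Matrix (Fin q) (Fin q) V),
    matNorm (Matrix.reindex finSumFinEquiv finSumFinEquiv (Matrix.fromBlocks v 0 0 w)) =
      max (matNorm v) (matNorm w)

/-- The operator space projective tensor norm `‖u‖_∧` of `u ∈ V ⊗ W`, with respect to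
given operator space structures on `V` and `W`:
`‖u‖_∧ = inf {‖α‖‖v‖‖w‖‖β‖ : u = α (v ⊗ w) β}`, where `α ∈ M_{1,pq}(ℂ)`,
`v ∈ M_p(V)`, `w ∈ M_q(W)`, `β ∈ M_{pq,1}(ℂ)`. -/
noncomputable def osProjNorm {V W : Type} [NormedAddCommGroup V] [NormedSpace ℂ V]
    [NormedAddCommGroup W] [NormedSpace ℂ W]
    (osV : OperatorSpaceStructure V) (osW : OperatorSpaceStructure W) (u : V ⊗[ℂ] W) : ℝ :=
  sInf {r | ∃ (p q : ℕ) (α : Matrix (Fin 1) (Fin p × Fin q) ℂ) (v : Matrix (Fin p) (Fin p) V)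
    (w : Matrix (Fin q) (Fin q) W) (β : Matrix (Fin p × Fin q) (Fin 1) ℂ),
    u = ∑ i, ∑ j, ∑ k, ∑ l, (α 0 (i, k) * β (j, l) 0) • (v i j ⊗ₜ[ℂ] w k l) ∧
    r = matOpNormC α * osV.matNorm v * osW.matNorm w * matOpNormC β}

section StarReps

/-- A `*`-homomorphism of a complex `*`-algebra on some Hilbert space (no contractivity
required). -/
structure StarHomOn (W : Type) [NonUnitalNonAssocSemiring W] [Module ℂ W] [Star W] where
  carrier : Type
  [normedAddCommGroup : NormedAddCommGroup carrier]
  [innerProductSpace : InnerProductSpace ℂ carrier]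
  [completeSpace : CompleteSpace carrier]
  hom : W →⋆ₙₐ[ℂ] (carrier →L[ℂ] carrier)

attribute [instance] StarHomOn.normedAddCommGroup StarHomOn.innerProductSpace
  StarHomOn.completeSpace

/-- A `*`-representation of a Banach `*`-algebra on some Hilbert space: a contractive
`*`-homomorphism into the bounded operators. -/
structure StarRepOn (X : Type) [NonUnitalNonAssocSemiring X] [Module ℂ X] [Star X] [Norm X] where
  carrier : Type
  [normedAddCommGroup : NormedAddCommGroup carrier]
  [innerProductSpace : InnerProductSpace ℂ carrier]
  [completeSpace : CompleteSpace carrier]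
  hom : X →⋆ₙₐ[ℂ] (carrier →L[ℂ] carrier)
  contractive : ∀ x, ‖hom x‖ ≤ ‖x‖

attribute [instance] StarRepOn.normedAddCommGroup StarRepOn.innerProductSpace
  StarRepOn.completeSpace

/-- Topological irreducibility of a `*`-representation: it is nonzero and the only closed
invariant subspaces are `⊥` and `⊤`. -/
def StarRepOn.IsIrreducible {X : Type} [NonUnitalNonAssocSemiring X] [Module ℂ X] [Star X]
    [Norm X] (ρ : StarRepOn X) : Prop :=
  (∃ x, ρ.hom x ≠ 0) ∧
    ∀ U : Submodule ℂ ρ.carrier, IsClosed (U : Set ρ.carrier) →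
      (∀ x : X, ∀ v ∈ U, ρ.hom x v ∈ U) → U = ⊥ ∨ U = ⊤

end StarReps

section BanachStar

variable (X : Type) [NonUnitalNormedRing X] [StarRing X] [NormedSpace ℂ X]

/-- A closed two-sided ideal of `X`. -/
def IsClosedIdeal (I : Submodule ℂ X) : Prop :=
  IsClosed (I : Set X) ∧ (∀ x : X, ∀ y ∈ I, x * y ∈ I) ∧ (∀ x : X, ∀ y ∈ I, y * x ∈ I)

/-- A `*`-ideal: an ideal closed under the involution. -/
def IsStarIdeal (I : Submodule ℂ X) : Prop := ∀ x ∈ I, star x ∈ I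

/-- A primitive ideal of `X`: the kernel of an irreducible `*`-representation of `X` on a
Hilbert space. -/
def IsPrimitiveIdeal (P : Submodule ℂ X) : Prop :=
  ∃ ρ : StarRepOn X, ρ.IsIrreducible ∧ (P : Set X) = {x | ρ.hom x = 0}

/-- The hull of a subset `M` of `X`: all primitive ideals containing `M`. -/
def hullOf (M : Set X) : Set (Submodule ℂ X) := {P | IsPrimitiveIdeal X P ∧ M ⊆ (P : Set X)}

/-- The kernel of a collection of ideals: their intersection. -/
def kernelOf (E : Set (Submodule ℂ X)) : Submodule ℂ X := sInf E

/-- A set of primitive ideals which is closed in the hull-kernel topology: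
`E = h(k(E))`. -/
def IsHkClosed (E : Set (Submodule ℂ X)) : Prop :=
  (∀ P ∈ E, IsPrimitiveIdeal X P) ∧ hullOf X (kernelOf X E : Set X) = E

/-- A (closed) subset `E` of `Prim(X)` is spectral if `k(E)` is the only closed ideal of `X`
whose hull equals `E`. -/
def IsSpectralSet (E : Set (Submodule ℂ X)) : Prop :=
  ∀ J : Submodule ℂ X, IsClosedIdeal X J → hullOf X (J : Set X) = E → J = kernelOf X E

/-- `X` has spectral synthesis if every hull-kernel closed subset of `Prim(X)` is spectral. -/
def HasSpectralSynthesis : Prop :=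
  ∀ E : Set (Submodule ℂ X), IsHkClosed X E → IsSpectralSet X E

/-- The Wiener property: every proper closed two-sided ideal of `X` is annihilated by some
irreducible `*`-representation, i.e. is contained in a primitive ideal. -/
def WienerProperty : Prop :=
  ∀ I : Submodule ℂ X, IsClosedIdeal X I → I ≠ ⊤ → ∃ P, IsPrimitiveIdeal X P ∧ I ≤ P

/-- The topology `τ_w` on the collection of ideals of `X`, generated by the sub-basic open
sets `Z_J = {I : I ⊉ J}` for closed ideals `J`. -/
def tauW : TopologicalSpace (Submodule ℂ X) :=
  .generateFrom {S | ∃ J : Submodule ℂ X, IsClosedIdeal X J ∧ S = {I | ¬ J ≤ I}}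

/-- A (two-sided) bounded approximate identity for an ideal `J` of `X`. -/
def HasBoundedApproxIdentity (J : Submodule ℂ X) : Prop :=
  ∃ (ι : Type) (l : Filter ι) (e : ι → X) (C : ℝ), l.NeBot ∧ (∀ i, e i ∈ J ∧ ‖e i‖ ≤ C) ∧
    ∀ y ∈ J, Filter.Tendsto (fun i => e i * y) l (nhds y) ∧
      Filter.Tendsto (fun i => y * e i) l (nhds y)

/-- A closed prime ideal of `X`: a proper closed ideal `P` such that `I·J ⊆ P` implies
`I ⊆ P` or `J ⊆ P` for closed ideals `I`, `J`. -/
def IsPrimeIdeal (P : Submodule ℂ X) : Prop :=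
  IsClosedIdeal X P ∧ P ≠ ⊤ ∧
    ∀ I J : Submodule ℂ X, IsClosedIdeal X I → IsClosedIdeal X J →
      (∀ x ∈ I, ∀ y ∈ J, x * y ∈ P) → I ≤ P ∨ J ≤ P

/-- The closed ideal generated by products of elements of `J` and `K`. -/
def mulIdeal (J K : Submodule ℂ X) : Submodule ℂ X :=
  (Submodule.span ℂ {z : X | ∃ x ∈ J, ∃ y ∈ K, z = x * y}).topologicalClosure

end BanachStar

section Models

variable (X : Type) [NonUnitalNormedRing X] [StarRing X] [NormedSpace ℂ X]

/-- A realization of a closed `*`-ideal `J` of `X` as a Banach `*`-algebra `Y`: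
an isometric `*`-isomorphism of `Y` onto `J`. -/
structure SubalgebraModel (J : Submodule ℂ X) (Y : Type) [NonUnitalNormedRing Y] [StarRing Y]
    [NormedSpace ℂ Y] where
  incl : Y →⋆ₙₐ[ℂ] X
  isometric : ∀ y, ‖incl y‖ = ‖y‖
  range_eq : Set.range incl = (J : Set X)

/-- A realization of the quotient Banach `*`-algebra `X/J`: a surjective `*`-homomorphism
with kernel `J`, carrying the quotient norm. -/
structure QuotientModel (J : Submodule ℂ X) (Z : Type) [NonUnitalNormedRing Z] [StarRing Z]
    [NormedSpace ℂ Z] where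
  proj : X →⋆ₙₐ[ℂ] Z
  surjective : Function.Surjective proj
  ker_eq : ∀ x, proj x = 0 ↔ x ∈ J
  norm_eq : ∀ x, ‖proj x‖ = Metric.infDist x (J : Set X)

end Models

section CStarTensor

/-- The canonical C*-norm on square matrices over a C*-algebra `A`, described as the
supremum of `‖π v‖` over all `*`-homomorphisms `π` of `M_p(A)` on Hilbert spaces. -/
noncomputable def matCStarNorm {A : Type} [NonUnitalCStarAlgebra A] {p : ℕ}
    (v : Matrix (Fin p) (Fin p) A) : ℝ :=
  sSup {r | ∃ ρ : StarHomOn (Matrix (Fin p) (Fin p) A), r = ‖ρ.hom v‖}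

/-- The operator space projective tensor norm `‖·‖_∧` on the algebraic tensor product
`A ⊗ B` of two C*-algebras. -/
noncomputable def projTensorNorm (A B : Type) [NonUnitalCStarAlgebra A] [NonUnitalCStarAlgebra B]
    (u : A ⊗[ℂ] B) : ℝ :=
  sInf {r | ∃ (p q : ℕ) (α : Matrix (Fin 1) (Fin p × Fin q) ℂ) (v : Matrix (Fin p) (Fin p) A)
    (w : Matrix (Fin q) (Fin q) B) (β : Matrix (Fin p × Fin q) (Fin 1) ℂ),
    u = ∑ i, ∑ j, ∑ k, ∑ l, (α 0 (i, k) * β (j, l) 0) • (v i j ⊗ₜ[ℂ] w k l) ∧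
    r = matOpNormC α * matCStarNorm v * matCStarNorm w * matOpNormC β}

/-- A realization of the operator space projective tensor product `A ⊗̂ B` of two
C*-algebras: a Banach `*`-algebra `X` containing `A ⊗ B` isometrically (for `‖·‖_∧`) and
densely, with multiplication and involution induced by the natural ones. -/
structure OSProjTensorProduct (A B : Type) [NonUnitalCStarAlgebra A] [NonUnitalCStarAlgebra B]
    (X : Type) [NonUnitalNormedRing X] [StarRing X] [NormedSpace ℂ X] [CompleteSpace X] where
  emb : (A ⊗[ℂ] B) →ₗ[ℂ] X
  norm_emb : ∀ u, ‖emb u‖ = projTensorNorm A B u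
  dense_range : DenseRange fun u => emb u
  mul_emb : ∀ (a c : A) (b d : B),
    emb (a ⊗ₜ[ℂ] b) * emb (c ⊗ₜ[ℂ] d) = emb ((a * c) ⊗ₜ[ℂ] (b * d))
  star_emb : ∀ (a : A) (b : B), star (emb (a ⊗ₜ[ℂ] b)) = emb (star a ⊗ₜ[ℂ] star b)

/-- A realization of a C*-tensor norm completion of `A ⊗ B`: a C*-algebra `Y` containing
`A ⊗ B` injectively and densely, with the natural multiplication and involution. -/
structure CStarTensorRealization (A B : Type) [NonUnitalCStarAlgebra A] [NonUnitalCStarAlgebra B]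
    (Y : Type) [NonUnitalCStarAlgebra Y] where
  emb : (A ⊗[ℂ] B) →ₗ[ℂ] Y
  injective : Function.Injective emb
  dense_range : DenseRange fun u => emb u
  mul_emb : ∀ (a c : A) (b d : B),
    emb (a ⊗ₜ[ℂ] b) * emb (c ⊗ₜ[ℂ] d) = emb ((a * c) ⊗ₜ[ℂ] (b * d))
  star_emb : ∀ (a : A) (b : B), star (emb (a ⊗ₜ[ℂ] b)) = emb (star a ⊗ₜ[ℂ] star b)

/-- A realization of the minimal (spatial) C*-tensor product `A ⊗_min B`: a C*-tensor norm
completion of `A ⊗ B` whose norm is minimal among all C*-tensor norms on `A ⊗ B`. -/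
structure MinTensorProduct (A B : Type) [NonUnitalCStarAlgebra A] [NonUnitalCStarAlgebra B]
    (Y : Type) [NonUnitalCStarAlgebra Y] extends CStarTensorRealization A B Y where
  norm_min : ∀ (Z : Type) [NonUnitalCStarAlgebra Z] (r : CStarTensorRealization A B Z)
    (u : A ⊗[ℂ] B), ‖emb u‖ ≤ ‖r.emb u‖

variable {A B : Type} [NonUnitalCStarAlgebra A] [NonUnitalCStarAlgebra B]
variable {X : Type} [NonUnitalNormedRing X] [StarRing X] [NormedSpace ℂ X] [CompleteSpace X]
variable {Y : Type} [NonUnitalCStarAlgebra Y]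

/-- The product ideal `M ⊗̂ N`: the closure in `A ⊗̂ B` of the span of elementary tensors
`a ⊗ b` with `a ∈ M`, `b ∈ N`. -/
noncomputable def prodIdeal (P : OSProjTensorProduct A B X) (M : Submodule ℂ A)
    (N : Submodule ℂ B) : Submodule ℂ X :=
  (Submodule.span ℂ {x : X | ∃ a ∈ M, ∃ b ∈ N, x = P.emb (a ⊗ₜ[ℂ] b)}).topologicalClosure

/-- The closed ideal `Φ(M, N) = A ⊗̂ N + M ⊗̂ B` of `A ⊗̂ B`. -/
noncomputable def PhiIdeal (P : OSProjTensorProduct A B X) (M : Submodule ℂ A)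
    (N : Submodule ℂ B) : Submodule ℂ X :=
  (prodIdeal P ⊤ N ⊔ prodIdeal P M ⊤).topologicalClosure

/-- The lower ideal `J_l` associated with a closed ideal `J` of `A ⊗̂ B`: the closure of the
span of all elementary tensors belonging to `J`. -/
noncomputable def lowerIdeal (P : OSProjTensorProduct A B X) (J : Submodule ℂ X) :
    Submodule ℂ X :=
  (Submodule.span ℂ {x : X | x ∈ J ∧ ∃ (a : A) (b : B), x = P.emb (a ⊗ₜ[ℂ] b)}).topologicalClosure

/-- The upper ideal `J^u = J_min ∩ (A ⊗̂ B)` associated with a closed ideal `J` of `A ⊗̂ B`,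
where `i : A ⊗̂ B → A ⊗_min B` is the canonical inclusion and `J_min` is the closure of
`i(J)` in `A ⊗_min B`. -/
noncomputable def upperIdeal (i : X →L[ℂ] Y) (J : Submodule ℂ X) : Submodule ℂ X :=
  Submodule.comap (i.toLinearMap) ((Submodule.map (i.toLinearMap) J).topologicalClosure)

/-- `i : X → Y` is the canonical `*`-homomorphism `A ⊗̂ B → A ⊗_min B` for the given
realizations: the continuous map which is the identity on the algebraic tensor product. -/
def IsCanonicalInclusion (P : OSProjTensorProduct A B X) (Mn : MinTensorProduct A B Y)
    (i : X →L[ℂ] Y) : Prop :=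
  ∀ u : A ⊗[ℂ] B, i (P.emb u) = Mn.emb u

/-- A closed ideal `J` of `A ⊗̂ B` is spectral if `J_l = J = J^u`. -/
def IsSpectralIdeal (P : OSProjTensorProduct A B X) (i : X →L[ℂ] Y) (J : Submodule ℂ X) :
    Prop :=
  lowerIdeal P J = J ∧ upperIdeal i J = J

/-- The product ideal `M ⊗_min N` inside a realization of `A ⊗_min B`. -/
noncomputable def minProdIdeal (Mn : MinTensorProduct A B Y) (M : Submodule ℂ A)
    (N : Submodule ℂ B) : Submodule ℂ Y :=
  (Submodule.span ℂ {y : Y | ∃ a ∈ M, ∃ b ∈ N, y = Mn.emb (a ⊗ₜ[ℂ] b)}).topologicalClosure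

/-- A realization of the quotient of a C*-algebra `A` by a closed ideal `M`: a surjective
`*`-homomorphism with kernel `M` (for C*-algebras, such a map automatically carries the
quotient norm). -/
structure CStarQuotientModel (A : Type) [NonUnitalCStarAlgebra A] (M : Submodule ℂ A)
    (A' : Type) [NonUnitalCStarAlgebra A'] where
  proj : A →⋆ₙₐ[ℂ] A'
  surjective : Function.Surjective proj
  ker_eq : ∀ a, proj a = 0 ↔ a ∈ M

end CStarTensor

/-- A realization of the Banach `*`-algebra `A ⊗̂_r A`: the operator space projective tensor
product `A ⊗̂ A` equipped with the reverse involution `(a ⊗ b)* = b* ⊗ a*`. -/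
structure OSProjTensorSquareRev (A : Type) [NonUnitalCStarAlgebra A]
    (X : Type) [NonUnitalNormedRing X] [StarRing X] [NormedSpace ℂ X] [CompleteSpace X] where
  emb : (A ⊗[ℂ] A) →ₗ[ℂ] X
  norm_emb : ∀ u, ‖emb u‖ = projTensorNorm A A u
  dense_range : DenseRange fun u => emb u
  mul_emb : ∀ a b c d : A,
    emb (a ⊗ₜ[ℂ] b) * emb (c ⊗ₜ[ℂ] d) = emb ((a * c) ⊗ₜ[ℂ] (b * d))
  star_emb : ∀ a b : A, star (emb (a ⊗ₜ[ℂ] b)) = emb (star b ⊗ₜ[ℂ] star a)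

end

open scoped TensorProduct

/-! ### Auxiliary lemmas for Statement 8 -/

section Stmt8Aux
set_option linter.unusedSectionVars false

variable {W : Type} [NonUnitalNormedRing W] [StarRing W] [NormedSpace ℂ W]

theorem starRepOn_continuous (ρ : StarRepOn W) : Continuous ρ.hom :=
  (LipschitzWith.of_dist_le_mul (K := 1) fun x y => by
    rw [dist_eq_norm, dist_eq_norm, ← map_sub]
    simpa using ρ.contractive (x - y)).continuous

theorem isPrimitiveIdeal_iff_mem {P : Submodule ℂ W} (h : IsPrimitiveIdeal W P) :
    ∃ ρ : StarRepOn W, ρ.IsIrreducible ∧ ∀ x, x ∈ P ↔ ρ.hom x = 0 := by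
  obtain ⟨ρ, hirr, hset⟩ := h
  exact ⟨ρ, hirr, fun x => by
    constructor
    · intro hx
      have : x ∈ (P : Set W) := hx
      rw [hset] at this; exact this
    · intro hx
      have : x ∈ (P : Set W) := by rw [hset]; exact hx
      exact this⟩

theorem isPrimitiveIdeal_isClosed {P : Submodule ℂ W} (h : IsPrimitiveIdeal W P) :
    IsClosed (P : Set W) := by
  obtain ⟨ρ, _, hset⟩ := h
  rw [hset]
  exact isClosed_eq (starRepOn_continuous ρ) continuous_const

theorem isPrimitiveIdeal_isClosedIdeal {P : Submodule ℂ W} (h : IsPrimitiveIdeal W P) :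
    IsClosedIdeal W P := by
  obtain ⟨ρ, _, hmem⟩ := isPrimitiveIdeal_iff_mem h
  refine ⟨isPrimitiveIdeal_isClosed h, fun x y hy => ?_, fun x y hy => ?_⟩
  · rw [hmem] at hy ⊢; rw [map_mul, hy, mul_zero]
  · rw [hmem] at hy ⊢; rw [map_mul, hy, zero_mul]

theorem mem_kernelOf {E : Set (Submodule ℂ W)} {x : W} :
    x ∈ kernelOf W E ↔ ∀ P ∈ E, x ∈ P := Submodule.mem_sInf

theorem subset_kernelOf_hullOf (M : Set W) :
    M ⊆ (kernelOf W (hullOf W M) : Set W) :=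
  fun _x hx => mem_kernelOf.2 fun _P hP => hP.2 hx

theorem hullOf_hkClosed (M : Set W) : IsHkClosed W (hullOf W M) := by
  refine ⟨fun _P hP => hP.1, Set.Subset.antisymm ?_ ?_⟩
  · rintro P ⟨hP, hsub⟩
    exact ⟨hP, (subset_kernelOf_hullOf M).trans hsub⟩
  · rintro P ⟨hP, hsub⟩
    exact ⟨hP, fun x hx => mem_kernelOf.1 hx P ⟨hP, hsub⟩⟩

/-- Stability of the closure of a span under a continuous linear map preserving generators. -/
theorem closure_span_stable {V : Type} [NormedAddCommGroup V] [NormedSpace ℂ V]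
    (f : V →ₗ[ℂ] V) (hf : Continuous f) (S : Set V)
    (h : ∀ s ∈ S, f s ∈ Submodule.span ℂ S) :
    ∀ v ∈ (Submodule.span ℂ S).topologicalClosure,
      f v ∈ (Submodule.span ℂ S).topologicalClosure := by
  intro v hv
  have hspan : ∀ w ∈ Submodule.span ℂ S, f w ∈ Submodule.span ℂ S := by
    intro w hw
    have hle : Submodule.map f (Submodule.span ℂ S) ≤ Submodule.span ℂ S := by
      rw [Submodule.map_span, Submodule.span_le]
      rintro _ ⟨s, hs, rfl⟩; exact h s hs
    exact hle ⟨w, hw, rfl⟩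
  have hv' : v ∈ closure ((Submodule.span ℂ S : Submodule ℂ V) : Set V) := hv
  have h1 : f v ∈ closure (f '' ((Submodule.span ℂ S : Submodule ℂ V) : Set V)) :=
    image_closure_subset_closure_image hf ⟨v, hv', rfl⟩
  have h2 : f '' ((Submodule.span ℂ S : Submodule ℂ V) : Set V)
      ⊆ ((Submodule.span ℂ S : Submodule ℂ V) : Set V) := by
    rintro _ ⟨u, hu, rfl⟩; exact hspan u hu
  exact closure_mono h2 h1

end Stmt8Aux

section Stmt8Rep
set_option linter.unusedSectionVars false
set_option maxHeartbeats 800000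

variable {W : Type} [NonUnitalNormedRing W] [StarRing W] [NormedSpace ℂ W]

/-- If an irreducible representation does not annihilate a right ideal `I`, then any vector
annihilated by all of `σ(I)` is zero. -/
theorem nullspace_eq_zero (I : Submodule ℂ W) (hIr : ∀ x : W, ∀ y ∈ I, y * x ∈ I)
    (σ : StarRepOn W) (hirr : σ.IsIrreducible) (ha : ∃ a ∈ I, σ.hom a ≠ 0) :
    ∀ ξ : σ.carrier, (∀ a ∈ I, σ.hom a ξ = 0) → ξ = 0 := by
  set N : Submodule ℂ σ.carrier :=
    { carrier := {ξ | ∀ a ∈ I, σ.hom a ξ = 0}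
      add_mem' := by
        intro ξ η hξ hη a haI
        rw [map_add, hξ a haI, hη a haI, add_zero]
      zero_mem' := by intro a haI; simp
      smul_mem' := by
        intro c ξ hξ a haI
        rw [map_smul, hξ a haI, smul_zero] } with hNdef
  have hNmem : ∀ ξ : σ.carrier, ξ ∈ N ↔ ∀ a ∈ I, σ.hom a ξ = 0 := fun ξ => Iff.rfl
  have hNclosed : IsClosed (N : Set σ.carrier) := by
    have hset : (N : Set σ.carrier)
        = ⋂ (a : W) (_ : a ∈ I), (fun ξ => σ.hom a ξ) ⁻¹' {0} := by
      ext ξ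
      constructor
      · intro hξ
        exact Set.mem_iInter.2 fun a => Set.mem_iInter.2 fun haI => hξ a haI
      · intro hξ a haI
        exact Set.mem_iInter.1 (Set.mem_iInter.1 hξ a) haI
    rw [hset]
    exact isClosed_iInter fun a => isClosed_iInter fun _ =>
      isClosed_singleton.preimage (σ.hom a).continuous
  have hNinv : ∀ x : W, ∀ ξ ∈ N, σ.hom x ξ ∈ N := by
    intro x ξ hξ a haI
    have h1 : σ.hom a (σ.hom x ξ) = σ.hom (a * x) ξ := by
      rw [map_mul, ContinuousLinearMap.mul_apply]
    rw [h1]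
    exact hξ (a * x) (hIr x a haI)
  rcases hirr.2 N hNclosed hNinv with hbot | htop
  · intro ξ hξ
    have hmemN : ξ ∈ N := hξ
    rw [hbot] at hmemN
    simpa using hmemN
  · obtain ⟨a, haI, haσ⟩ := ha
    exfalso
    apply haσ
    refine ContinuousLinearMap.ext fun ξ => ?_
    have hξN : ξ ∈ N := by rw [htop]; trivial
    rw [ContinuousLinearMap.zero_apply]
    exact hξN a haI

/-- If an irreducible representation does not annihilate a left ideal `I`, then the span of
`σ(I)H` is dense. -/
theorem span_orbit_dense (I : Submodule ℂ W) (hIl : ∀ x : W, ∀ y ∈ I, x * y ∈ I)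
    (σ : StarRepOn W) (hirr : σ.IsIrreducible) (ha : ∃ a ∈ I, σ.hom a ≠ 0) :
    (Submodule.span ℂ {v : σ.carrier | ∃ a ∈ I, ∃ ξ, v = σ.hom a ξ}).topologicalClosure
      = ⊤ := by
  set S := {v : σ.carrier | ∃ a ∈ I, ∃ ξ, v = σ.hom a ξ} with hS
  have hinv : ∀ x : W, ∀ v ∈ (Submodule.span ℂ S).topologicalClosure,
      σ.hom x v ∈ (Submodule.span ℂ S).topologicalClosure := by
    intro x v hv
    refine closure_span_stable (σ.hom x).toLinearMap (σ.hom x).continuous S ?_ v hv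
    rintro s ⟨a, haI, ξ, rfl⟩
    refine Submodule.subset_span ⟨x * a, hIl x a haI, ξ, ?_⟩
    rw [map_mul, ContinuousLinearMap.mul_apply]
    rfl
  rcases hirr.2 (Submodule.span ℂ S).topologicalClosure
      (Submodule.isClosed_topologicalClosure _) hinv with hbot | htop
  · exfalso
    obtain ⟨a, haI, haσ⟩ := ha
    apply haσ
    refine ContinuousLinearMap.ext fun ξ => ?_
    have h1 : σ.hom a ξ ∈ (Submodule.span ℂ S).topologicalClosure :=
      Submodule.le_topologicalClosure _ (Submodule.subset_span ⟨a, haI, ξ, rfl⟩)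
    rw [hbot] at h1
    simpa using h1
  · exact htop

/-- If `a x b ∈ P` for all `a, b` in an ideal `J` not annihilated at `P`, then `x ∈ P`. -/
theorem mem_primitive_of_sandwich (J : Submodule ℂ W)
    (hJl : ∀ x : W, ∀ y ∈ J, x * y ∈ J) (hJr : ∀ x : W, ∀ y ∈ J, y * x ∈ J)
    {P : Submodule ℂ W} (hP : IsPrimitiveIdeal W P) (hnle : ¬ (J : Set W) ⊆ (P : Set W))
    (x : W) (hx : ∀ a ∈ J, ∀ b ∈ J, a * x * b ∈ P) : x ∈ P := by
  obtain ⟨σ, hirr, hmem⟩ := isPrimitiveIdeal_iff_mem hP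
  obtain ⟨a₀, ha₀J, ha₀P⟩ := Set.not_subset.1 hnle
  have ha : ∃ a ∈ J, σ.hom a ≠ 0 := ⟨a₀, ha₀J, fun h => ha₀P ((hmem a₀).2 h)⟩
  rw [hmem]
  have key : ∀ b ∈ J, ∀ ξ : σ.carrier, σ.hom x (σ.hom b ξ) = 0 := by
    intro b hbJ ξ
    refine nullspace_eq_zero J hJr σ hirr ha _ (fun a haJ => ?_)
    have h1 : σ.hom (a * x * b) = 0 := (hmem _).1 (hx a haJ b hbJ)
    calc σ.hom a (σ.hom x (σ.hom b ξ)) = σ.hom (a * x * b) ξ := by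
          rw [map_mul, map_mul, ContinuousLinearMap.mul_apply,
            ContinuousLinearMap.mul_apply]
      _ = 0 := by rw [h1]; simp
  have hdense := span_orbit_dense J hJl σ hirr ha
  refine ContinuousLinearMap.ext fun ξ => ?_
  have hξ : ξ ∈ (Submodule.span ℂ
      {v : σ.carrier | ∃ a ∈ J, ∃ η, v = σ.hom a η}).topologicalClosure := by
    rw [hdense]; trivial
  have hker : (Submodule.span ℂ
      {v : σ.carrier | ∃ a ∈ J, ∃ η, v = σ.hom a η}).topologicalClosure
      ≤ LinearMap.ker (σ.hom x).toLinearMap := by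
    refine Submodule.topologicalClosure_minimal _ ?_ ?_
    · rw [Submodule.span_le]
      rintro _ ⟨a, haJ, η, rfl⟩
      exact LinearMap.mem_ker.2 (key a haJ η)
    · exact ContinuousLinearMap.isClosed_ker (σ.hom x)
  rw [ContinuousLinearMap.zero_apply]
  exact LinearMap.mem_ker.1 (hker hξ)

/-- If all triple products from a right ideal `I` lie in a primitive ideal `P`,
then `I ⊆ P`. -/
theorem subset_primitive_of_triple {P : Submodule ℂ W} (hP : IsPrimitiveIdeal W P)
    (I : Submodule ℂ W) (hIr : ∀ x : W, ∀ y ∈ I, y * x ∈ I)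
    (h3 : ∀ i₁ ∈ I, ∀ i₂ ∈ I, ∀ i₃ ∈ I, i₁ * i₂ * i₃ ∈ P) :
    (I : Set W) ⊆ (P : Set W) := by
  obtain ⟨σ, hirr, hmem⟩ := isPrimitiveIdeal_iff_mem hP
  by_cases hIσ : ∃ a ∈ I, σ.hom a ≠ 0
  · intro i₃ hi₃
    have hzero : ∀ ξ, σ.hom i₃ ξ = 0 := by
      intro ξ
      refine nullspace_eq_zero I hIr σ hirr hIσ _ (fun i₂ hi₂ => ?_)
      refine nullspace_eq_zero I hIr σ hirr hIσ _ (fun i₁ hi₁ => ?_)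
      have h1 : σ.hom (i₁ * i₂ * i₃) = 0 := (hmem _).1 (h3 i₁ hi₁ i₂ hi₂ i₃ hi₃)
      calc σ.hom i₁ (σ.hom i₂ (σ.hom i₃ ξ)) = σ.hom (i₁ * i₂ * i₃) ξ := by
            rw [map_mul, map_mul, ContinuousLinearMap.mul_apply,
              ContinuousLinearMap.mul_apply]
        _ = 0 := by rw [h1]; simp
    exact (hmem i₃).2 (ContinuousLinearMap.ext fun ξ => by
      rw [ContinuousLinearMap.zero_apply]; exact hzero ξ)
  · intro i hi
    push_neg at hIσ
    exact (hmem i).2 (hIσ i hi)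

end Stmt8Rep

/-- The underlying linear map of a non-unital algebra homomorphism. -/
def NonUnitalAlgHom.toLinearMap {R A B : Type*} [CommSemiring R] [NonUnitalNonAssocSemiring A]
    [Module R A] [NonUnitalNonAssocSemiring B] [Module R B] (f : A →ₙₐ[R] B) : A →ₗ[R] B :=
  f.toDistribMulActionHom

@[simp]
theorem NonUnitalAlgHom.toLinearMap_apply {R A B : Type*} [CommSemiring R]
    [NonUnitalNonAssocSemiring A] [Module R A] [NonUnitalNonAssocSemiring B] [Module R B]
    (f : A →ₙₐ[R] B) (x : A) : f.toLinearMap x = f x :=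
  rfl

section Stmt8Quot
set_option linter.unusedSectionVars false
set_option maxHeartbeats 1600000

variable (X : Type) [NonUnitalNormedRing X] [StarRing X] [NormedSpace ℂ X]
variable (J : Submodule ℂ X)
variable (Z : Type) [NonUnitalNormedRing Z] [StarRing Z] [NormedSpace ℂ Z]

theorem quotientModel_norm_le (mZ : QuotientModel X J Z) (x : X) : ‖mZ.proj x‖ ≤ ‖x‖ := by
  rw [mZ.norm_eq]
  have h0 : (0 : X) ∈ (J : Set X) := J.zero_mem
  calc Metric.infDist x (J : Set X) ≤ dist x 0 := Metric.infDist_le_dist_of_mem h0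
    _ = ‖x‖ := dist_zero_right x

theorem quotientModel_continuous (mZ : QuotientModel X J Z) : Continuous mZ.proj :=
  (LipschitzWith.of_dist_le_mul (K := 1) fun x y => by
    rw [dist_eq_norm, dist_eq_norm, ← map_sub]
    simpa using quotientModel_norm_le X J Z mZ (x - y)).continuous

theorem quotient_pullback_primitive (mZ : QuotientModel X J Z) (Q : Submodule ℂ Z)
    (hQ : IsPrimitiveIdeal Z Q) :
    IsPrimitiveIdeal X (Submodule.comap (mZ.proj.toNonUnitalAlgHom.toLinearMap) Q) := by
  obtain ⟨ρ, hirr, hmem⟩ := isPrimitiveIdeal_iff_mem hQ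
  refine ⟨{ carrier := ρ.carrier
            hom := ρ.hom.comp mZ.proj
            contractive := fun x =>
              le_trans (ρ.contractive _) (quotientModel_norm_le X J Z mZ x) }, ?_, ?_⟩
  · constructor
    · obtain ⟨z, hz⟩ := hirr.1
      obtain ⟨x, rfl⟩ := mZ.surjective z
      exact ⟨x, hz⟩
    · intro U hUc hUinv
      refine hirr.2 U hUc ?_
      intro z v hv
      obtain ⟨x, rfl⟩ := mZ.surjective z
      exact hUinv x v hv
  · ext x
    constructor
    · intro hx
      exact (hmem (mZ.proj x)).1 hx
    · intro hx
      exact (hmem (mZ.proj x)).2 hx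

theorem quotient_pushforward_primitive (mZ : QuotientModel X J Z) (P : Submodule ℂ X)
    (hP : IsPrimitiveIdeal X P) (hJP : (J : Set X) ⊆ (P : Set X)) :
    IsPrimitiveIdeal Z (Submodule.map (mZ.proj.toNonUnitalAlgHom.toLinearMap) P) ∧
      Submodule.comap (mZ.proj.toNonUnitalAlgHom.toLinearMap)
        (Submodule.map (mZ.proj.toNonUnitalAlgHom.toLinearMap) P) = P := by
  obtain ⟨σ, hirr, hmem⟩ := isPrimitiveIdeal_iff_mem hP
  set πl := mZ.proj.toNonUnitalAlgHom.toLinearMap with hπl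
  set s : Z → X := Function.surjInv mZ.surjective with hs
  set f : Z → (σ.carrier →L[ℂ] σ.carrier) := fun z => σ.hom (s z) with hf
  have key : ∀ x : X, f (mZ.proj x) = σ.hom x := by
    intro x
    have h1 : mZ.proj (s (mZ.proj x)) = mZ.proj x := Function.surjInv_eq mZ.surjective _
    have h2 : mZ.proj (s (mZ.proj x) - x) = 0 := by rw [map_sub, h1, sub_self]
    have h3 : s (mZ.proj x) - x ∈ J := (mZ.ker_eq _).1 h2
    have h4 : σ.hom (s (mZ.proj x) - x) = 0 := (hmem _).1 (hJP h3)
    have h5 : σ.hom (s (mZ.proj x)) - σ.hom x = 0 := by rw [← map_sub]; exact h4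
    exact sub_eq_zero.mp h5
  have hker : ∀ z : Z, f z = 0 ↔ z ∈ Submodule.map πl P := by
    intro z
    constructor
    · intro hz
      obtain ⟨x, rfl⟩ := mZ.surjective z
      have hσx : σ.hom x = 0 := (key x).symm.trans hz
      exact ⟨x, (hmem x).2 hσx, rfl⟩
    · rintro ⟨x, hx, rfl⟩
      exact (key x).trans ((hmem x).1 hx)
  have hcontr : ∀ z : Z, ‖f z‖ ≤ ‖z‖ := by
    intro z
    obtain ⟨x, rfl⟩ := mZ.surjective z
    have hnonempty : Nonempty ↥(J : Set X) := ⟨⟨0, J.zero_mem⟩⟩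
    rw [key, mZ.norm_eq, Metric.infDist_eq_iInf]
    refine le_ciInf fun y => ?_
    have h4 : σ.hom (y : X) = 0 := (hmem _).1 (hJP y.2)
    have h5 : σ.hom x = σ.hom (x - (y : X)) := by rw [map_sub, h4, sub_zero]
    rw [h5, dist_eq_norm]
    exact σ.contractive _
  have hmap_smul : ∀ (c : ℂ) (z : Z), f (c • z) = c • f z := by
    intro c z
    obtain ⟨x, rfl⟩ := mZ.surjective z
    have h1 : c • mZ.proj x = mZ.proj (c • x) := (map_smul mZ.proj c x).symm
    rw [h1, key, key, map_smul]
  have hmap_zero : f 0 = 0 := by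
    have h1 : (0 : Z) = mZ.proj 0 := (map_zero mZ.proj).symm
    rw [h1, key, map_zero]
  have hmap_add : ∀ z w : Z, f (z + w) = f z + f w := by
    intro z w
    obtain ⟨x, rfl⟩ := mZ.surjective z
    obtain ⟨y, rfl⟩ := mZ.surjective w
    have h1 : mZ.proj x + mZ.proj y = mZ.proj (x + y) := (map_add mZ.proj x y).symm
    rw [h1, key, key, key, map_add]
  have hmap_mul : ∀ z w : Z, f (z * w) = f z * f w := by
    intro z w
    obtain ⟨x, rfl⟩ := mZ.surjective z
    obtain ⟨y, rfl⟩ := mZ.surjective w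
    have h1 : mZ.proj x * mZ.proj y = mZ.proj (x * y) := (map_mul mZ.proj x y).symm
    rw [h1, key, key, key, map_mul]
  have hmap_star : ∀ z : Z, f (star z) = star (f z) := by
    intro z
    obtain ⟨x, rfl⟩ := mZ.surjective z
    have h1 : star (mZ.proj x) = mZ.proj (star x) := (map_star mZ.proj x).symm
    rw [h1, key, key, map_star]
  let homZ : Z →⋆ₙₐ[ℂ] (σ.carrier →L[ℂ] σ.carrier) :=
    { toFun := f
      map_smul' := hmap_smul
      map_zero' := hmap_zero
      map_add' := hmap_add
      map_mul' := hmap_mul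
      map_star' := hmap_star }
  have homZ_apply : ∀ z : Z, homZ z = f z := fun _ => rfl
  let ρZ : StarRepOn Z :=
    { carrier := σ.carrier
      hom := homZ
      contractive := hcontr }
  have hρZ : ∀ z : Z, ρZ.hom z = f z := fun _ => rfl
  refine ⟨⟨ρZ, ⟨?_, ?_⟩, ?_⟩, ?_⟩
  · obtain ⟨x, hx⟩ := hirr.1
    refine ⟨mZ.proj x, ?_⟩
    rw [hρZ, key]
    exact hx
  · intro U hUc hUinv
    refine hirr.2 U hUc ?_
    intro x v hv
    have h1 := hUinv (mZ.proj x) v hv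
    rw [hρZ, key] at h1
    exact h1
  · ext z
    constructor
    · intro hz
      show ρZ.hom z = 0
      rw [hρZ]
      exact (hker z).2 hz
    · intro hz
      have h1 : f z = 0 := hz
      exact (hker z).1 h1
  · ext x
    constructor
    · intro hx
      have h1 : f (mZ.proj x) = 0 := (hker _).2 hx
      exact (hmem x).2 ((key x).symm.trans h1)
    · intro hx
      exact (hker _).1 ((key x).trans ((hmem x).1 hx))

theorem quotient_hasSpectralSynthesis (mZ : QuotientModel X J Z)
    (hss : HasSpectralSynthesis X) : HasSpectralSynthesis Z := by
  intro E hE K hK hKE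
  set πl := mZ.proj.toNonUnitalAlgHom.toLinearMap with hπl
  have hπsurj : Function.Surjective πl := mZ.surjective
  set K' := Submodule.comap πl K with hK'
  have hK'closed : IsClosedIdeal X K' := by
    refine ⟨?_, ?_, ?_⟩
    · have h1 : (K' : Set X) = mZ.proj ⁻¹' (K : Set Z) := rfl
      rw [h1]
      exact hK.1.preimage (quotientModel_continuous X J Z mZ)
    · intro x y hy
      show mZ.proj (x * y) ∈ K
      rw [map_mul]
      exact hK.2.1 _ _ hy
    · intro x y hy
      show mZ.proj (y * x) ∈ K
      rw [map_mul]
      exact hK.2.2 _ _ hy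
  have hhull : hullOf X (K' : Set X) = (Submodule.comap πl) '' E := by
    ext P
    constructor
    · rintro ⟨hP, hsub⟩
      have hJP : (J : Set X) ⊆ (P : Set X) := by
        intro j hj
        refine hsub ?_
        show mZ.proj j ∈ K
        rw [(mZ.ker_eq j).2 hj]
        exact K.zero_mem
      obtain ⟨hQprim, hQeq⟩ := quotient_pushforward_primitive X J Z mZ P hP hJP
      refine ⟨Submodule.map πl P, ?_, hQeq⟩
      rw [← hKE]
      refine ⟨hQprim, ?_⟩
      intro z hz
      obtain ⟨x, rfl⟩ := mZ.surjective z
      have hxK' : x ∈ K' := hz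
      exact ⟨x, hsub hxK', rfl⟩
    · rintro ⟨Q, hQE, rfl⟩
      refine ⟨quotient_pullback_primitive X J Z mZ Q (hE.1 Q hQE), ?_⟩
      have hKQ : (K : Set Z) ⊆ (Q : Set Z) := by
        have hQ' : Q ∈ hullOf Z (K : Set Z) := by rw [hKE]; exact hQE
        exact hQ'.2
      intro x hx
      exact hKQ hx
  have hhk : IsHkClosed X (hullOf X (K' : Set X)) := hullOf_hkClosed _
  have h1 : K' = kernelOf X (hullOf X (K' : Set X)) :=
    hss _ hhk K' hK'closed rfl
  have h2 : kernelOf X (hullOf X (K' : Set X)) = Submodule.comap πl (kernelOf Z E) := by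
    rw [hhull]
    ext x
    simp only [kernelOf, Submodule.mem_sInf, Submodule.mem_comap]
    constructor
    · intro h Q hQ
      exact h _ ⟨Q, hQ, rfl⟩
    · rintro h _ ⟨Q, hQ, rfl⟩
      exact h Q hQ
  exact Submodule.comap_injective_of_surjective hπsurj (h1.trans h2)

end Stmt8Quot

section Stmt8Ideal
set_option linter.unusedSectionVars false
set_option maxHeartbeats 1600000

variable (X : Type) [NonUnitalNormedRing X] [StarRing X] [NormedSpace ℂ X]
  [IsScalarTower ℂ X X] [SMulCommClass ℂ X X]
variable (J : Submodule ℂ X)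
variable (Y : Type) [NonUnitalNormedRing Y] [StarRing Y] [NormedSpace ℂ Y] [CompleteSpace Y]

/-- The ideal `{x | J·x·J ⊆ M}`. -/
def sandwichIdeal (M : Submodule ℂ X) : Submodule ℂ X where
  carrier := {x | ∀ a ∈ J, ∀ b ∈ J, a * x * b ∈ M}
  add_mem' := by
    intro x y hx hy a ha b hb
    have h1 : a * (x + y) * b = a * x * b + a * y * b := by
      rw [mul_add, add_mul]
    rw [h1]
    exact M.add_mem (hx a ha b hb) (hy a ha b hb)
  zero_mem' := by
    intro a ha b hb
    simp only [mul_zero, zero_mul]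
    exact M.zero_mem
  smul_mem' := by
    intro c x hx a ha b hb
    have h1 : a * (c • x) * b = c • (a * x * b) := by
      rw [mul_smul_comm, smul_mul_assoc]
    rw [h1]
    exact M.smul_mem c (hx a ha b hb)

theorem mem_sandwichIdeal {M : Submodule ℂ X} {x : X} :
    x ∈ sandwichIdeal X J M ↔ ∀ a ∈ J, ∀ b ∈ J, a * x * b ∈ M := Iff.rfl

theorem sandwichIdeal_isClosedIdeal (M : Submodule ℂ X) (hJ : IsClosedIdeal X J)
    (hM : IsClosed (M : Set X)) : IsClosedIdeal X (sandwichIdeal X J M) := by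
  refine ⟨?_, ?_, ?_⟩
  · have h1 : ((sandwichIdeal X J M : Submodule ℂ X) : Set X)
        = ⋂ (a : X) (_ : a ∈ J) (b : X) (_ : b ∈ J), (fun x => a * x * b) ⁻¹' (M : Set X) := by
      ext x
      constructor
      · intro hx
        exact Set.mem_iInter.2 fun a => Set.mem_iInter.2 fun ha =>
          Set.mem_iInter.2 fun b => Set.mem_iInter.2 fun hb => hx a ha b hb
      · intro hx a ha b hb
        exact Set.mem_iInter.1 (Set.mem_iInter.1
          (Set.mem_iInter.1 (Set.mem_iInter.1 hx a) ha) b) hb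
    rw [h1]
    refine isClosed_iInter fun a => isClosed_iInter fun _ =>
      isClosed_iInter fun b => isClosed_iInter fun _ => ?_
    exact hM.preimage ((continuous_const.mul continuous_id).mul continuous_const)
  · intro x y hy a ha b hb
    have h1 : a * (x * y) * b = (a * x) * y * b := by rw [← mul_assoc a x y]
    rw [h1]
    exact hy (a * x) (hJ.2.2 x a ha) b hb
  · intro x y hy a ha b hb
    have h1 : a * (y * x) * b = a * y * (x * b) := by
      rw [← mul_assoc a y x, mul_assoc (a * y) x b]
    rw [h1]
    exact hy a ha (x * b) (hJ.2.1 x b hb)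

theorem subalgebraModel_isometry (mY : SubalgebraModel X J Y) : Isometry mY.incl :=
  AddMonoidHomClass.isometry_of_norm _ mY.isometric

theorem restriction_primitive (mY : SubalgebraModel X J Y)
    (hJ : IsClosedIdeal X J) (P : Submodule ℂ X) (hP : IsPrimitiveIdeal X P)
    (hnle : ¬ (J : Set X) ⊆ (P : Set X)) :
    IsPrimitiveIdeal Y (Submodule.comap (mY.incl.toNonUnitalAlgHom.toLinearMap) P) := by
  obtain ⟨σ, hirr, hmem⟩ := isPrimitiveIdeal_iff_mem hP
  obtain ⟨a₀, ha₀J, ha₀P⟩ := Set.not_subset.1 hnle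
  have ha : ∃ a ∈ J, σ.hom a ≠ 0 := ⟨a₀, ha₀J, fun h => ha₀P ((hmem a₀).2 h)⟩
  have hrange : ∀ a : X, a ∈ J → ∃ y : Y, mY.incl y = a := by
    intro a haJ
    have h1 : a ∈ Set.range mY.incl := by rw [mY.range_eq]; exact haJ
    exact h1
  let ρ : StarRepOn Y :=
    { carrier := σ.carrier
      hom := σ.hom.comp mY.incl
      contractive := fun y => by
        have h1 : ‖σ.hom (mY.incl y)‖ ≤ ‖mY.incl y‖ := σ.contractive _
        rw [mY.isometric] at h1
        exact h1 }
  have hρ : ∀ y : Y, ρ.hom y = σ.hom (mY.incl y) := fun _ => rfl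
  refine ⟨ρ, ⟨?_, ?_⟩, ?_⟩
  · obtain ⟨y₀, hy₀⟩ := hrange a₀ ha₀J
    refine ⟨y₀, ?_⟩
    rw [hρ, hy₀]
    exact fun h => ha₀P ((hmem a₀).2 h)
  · intro U hUc hUinv
    by_cases hUbot : U = ⊥
    · exact Or.inl hUbot
    right
    set S := {v : σ.carrier | ∃ a ∈ J, ∃ u ∈ U, v = σ.hom a u} with hS
    have hSU : S ⊆ (U : Set σ.carrier) := by
      rintro _ ⟨a, haJ, u, hu, rfl⟩
      obtain ⟨y, rfl⟩ := hrange a haJ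
      exact hUinv y u hu
    have hinv : ∀ x : X, ∀ v ∈ (Submodule.span ℂ S).topologicalClosure,
        σ.hom x v ∈ (Submodule.span ℂ S).topologicalClosure := by
      intro x v hv
      refine closure_span_stable (σ.hom x).toLinearMap (σ.hom x).continuous S ?_ v hv
      rintro _ ⟨a, haJ, u, hu, rfl⟩
      refine Submodule.subset_span ⟨x * a, hJ.2.1 x a haJ, u, hu, ?_⟩
      rw [map_mul, ContinuousLinearMap.mul_apply]
      rfl
    rcases hirr.2 _ (Submodule.isClosed_topologicalClosure _) hinv with hbot | htop
    · exfalso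
      obtain ⟨u₀, hu₀U, hu₀⟩ := Submodule.exists_mem_ne_zero_of_ne_bot hUbot
      apply hu₀
      refine nullspace_eq_zero J hJ.2.2 σ hirr ha u₀ ?_
      intro a haJ
      have h1 : σ.hom a u₀ ∈ (Submodule.span ℂ S).topologicalClosure :=
        Submodule.le_topologicalClosure _ (Submodule.subset_span ⟨a, haJ, u₀, hu₀U, rfl⟩)
      rw [hbot] at h1
      simpa using h1
    · have h1 : (Submodule.span ℂ S).topologicalClosure ≤ U := by
        refine Submodule.topologicalClosure_minimal _ ?_ hUc
        rw [Submodule.span_le]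
        exact hSU
      rw [htop] at h1
      exact top_le_iff.1 h1
  · ext y
    constructor
    · intro hy
      exact (hmem (mY.incl y)).1 hy
    · intro hy
      exact (hmem (mY.incl y)).2 hy

theorem ideal_hasSpectralSynthesis (mY : SubalgebraModel X J Y) (hJ : IsClosedIdeal X J)
    (hss : HasSpectralSynthesis X) : HasSpectralSynthesis Y := by
  intro E hE K hK hKE
  have hιinj : Function.Injective mY.incl := (subalgebraModel_isometry X J Y mY).injective
  have hrange : ∀ a : X, a ∈ J → ∃ y : Y, mY.incl y = a := by
    intro a haJ
    have h1 : a ∈ Set.range mY.incl := by rw [mY.range_eq]; exact haJ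
    exact h1
  have hmemJ : ∀ y : Y, mY.incl y ∈ J := by
    intro y
    have h1 : mY.incl y ∈ Set.range mY.incl := ⟨y, rfl⟩
    rw [mY.range_eq] at h1
    exact h1
  have hmap_closed : ∀ Q : Submodule ℂ Y, IsClosed (Q : Set Y) →
      IsClosed ((Submodule.map (mY.incl.toNonUnitalAlgHom.toLinearMap) Q
        : Submodule ℂ X) : Set X) := by
    intro Q hQ
    have h1 : ((Submodule.map (mY.incl.toNonUnitalAlgHom.toLinearMap) Q
        : Submodule ℂ X) : Set X) = mY.incl '' (Q : Set Y) := by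
      ext x
      exact ⟨fun ⟨y, hy, hyx⟩ => ⟨y, hy, hyx⟩, fun ⟨y, hy, hyx⟩ => ⟨y, hy, hyx⟩⟩
    rw [h1]
    exact ((subalgebraModel_isometry X J Y mY).isClosedEmbedding).isClosedMap _ hQ
  set k := kernelOf Y E with hkdef
  have hkclosed : IsClosed (k : Set Y) := by
    have h1 : (k : Set Y) = ⋂ Q ∈ E, (Q : Set Y) := Submodule.coe_sInf E
    rw [h1]
    exact isClosed_biInter fun Q hQ => isPrimitiveIdeal_isClosed (hE.1 Q hQ)
  have hkideal_l : ∀ u : Y, ∀ y ∈ k, u * y ∈ k := by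
    intro u y hy
    exact mem_kernelOf.2 fun Q hQ =>
      (isPrimitiveIdeal_isClosedIdeal (hE.1 Q hQ)).2.1 u y (mem_kernelOf.1 hy Q hQ)
  have hkideal_r : ∀ u : Y, ∀ y ∈ k, y * u ∈ k := by
    intro u y hy
    exact mem_kernelOf.2 fun Q hQ =>
      (isPrimitiveIdeal_isClosedIdeal (hE.1 Q hQ)).2.2 u y (mem_kernelOf.1 hy Q hQ)
  have hKk : K ≤ k := by
    intro y hy
    refine mem_kernelOf.2 fun Q hQ => ?_
    have hQhull : Q ∈ hullOf Y (K : Set Y) := by rw [hKE]; exact hQ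
    exact hQhull.2 hy
  set K' := Submodule.map (mY.incl.toNonUnitalAlgHom.toLinearMap) K with hK'def
  set k' := Submodule.map (mY.incl.toNonUnitalAlgHom.toLinearMap) k with hk'def
  set Kst := sandwichIdeal X J K' ⊓ J with hKstdef
  set kst := sandwichIdeal X J k' ⊓ J with hkstdef
  have hK'closed : IsClosed (K' : Set X) := hmap_closed K hK.1
  have hk'closed : IsClosed (k' : Set X) := hmap_closed k hkclosed
  have hKstclosed : IsClosedIdeal X Kst := by
    obtain ⟨h1, h2, h3⟩ := sandwichIdeal_isClosedIdeal X J K' hJ hK'closed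
    refine ⟨?_, ?_, ?_⟩
    · rw [hKstdef, Submodule.coe_inf]
      exact IsClosed.inter h1 hJ.1
    · intro x y hy
      obtain ⟨hy1, hy2⟩ := Submodule.mem_inf.1 hy
      exact Submodule.mem_inf.2 ⟨h2 x y hy1, hJ.2.1 x y hy2⟩
    · intro x y hy
      obtain ⟨hy1, hy2⟩ := Submodule.mem_inf.1 hy
      exact Submodule.mem_inf.2 ⟨h3 x y hy1, hJ.2.2 x y hy2⟩
  have hkstclosed : IsClosedIdeal X kst := by
    obtain ⟨h1, h2, h3⟩ := sandwichIdeal_isClosedIdeal X J k' hJ hk'closed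
    refine ⟨?_, ?_, ?_⟩
    · rw [hkstdef, Submodule.coe_inf]
      exact IsClosed.inter h1 hJ.1
    · intro x y hy
      obtain ⟨hy1, hy2⟩ := Submodule.mem_inf.1 hy
      exact Submodule.mem_inf.2 ⟨h2 x y hy1, hJ.2.1 x y hy2⟩
    · intro x y hy
      obtain ⟨hy1, hy2⟩ := Submodule.mem_inf.1 hy
      exact Submodule.mem_inf.2 ⟨h3 x y hy1, hJ.2.2 x y hy2⟩
  have hK'le : K' ≤ Kst := by
    rintro _ ⟨y, hy, rfl⟩
    refine Submodule.mem_inf.2 ⟨?_, hmemJ y⟩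
    intro a haJ b hbJ
    obtain ⟨u, hu⟩ := hrange a haJ
    obtain ⟨v, hv⟩ := hrange b hbJ
    refine ⟨u * y * v, hK.2.2 v (u * y) (hK.2.1 u y hy), ?_⟩
    show mY.incl (u * y * v) = a * mY.incl y * b
    rw [map_mul, map_mul, hu, hv]
  have hk'le : k' ≤ kst := by
    rintro _ ⟨y, hy, rfl⟩
    refine Submodule.mem_inf.2 ⟨?_, hmemJ y⟩
    intro a haJ b hbJ
    obtain ⟨u, hu⟩ := hrange a haJ
    obtain ⟨v, hv⟩ := hrange b hbJ
    refine ⟨u * y * v, hkideal_r v (u * y) (hkideal_l u y hy), ?_⟩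
    show mY.incl (u * y * v) = a * mY.incl y * b
    rw [map_mul, map_mul, hu, hv]
  have hKstlekst : Kst ≤ kst := by
    intro x hx
    obtain ⟨hx1, hx2⟩ := Submodule.mem_inf.1 hx
    refine Submodule.mem_inf.2 ⟨?_, hx2⟩
    intro a haJ b hbJ
    exact Submodule.map_mono hKk (hx1 a haJ b hbJ)
  have hhull_eq : hullOf X (kst : Set X) = hullOf X (Kst : Set X) := by
    ext P
    constructor
    · rintro ⟨hP, hsub⟩
      exact ⟨hP, fun x hx => hsub (hKstlekst hx)⟩
    · rintro ⟨hP, hsub⟩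
      refine ⟨hP, ?_⟩
      by_cases hJP : (J : Set X) ⊆ (P : Set X)
      · intro x hx
        exact hJP (Submodule.mem_inf.1 hx).2
      · have hQprim : IsPrimitiveIdeal Y
            (Submodule.comap (mY.incl.toNonUnitalAlgHom.toLinearMap) P) :=
          restriction_primitive X J Y mY hJ P hP hJP
        have hKQ : (K : Set Y)
            ⊆ ((Submodule.comap (mY.incl.toNonUnitalAlgHom.toLinearMap) P
              : Submodule ℂ Y) : Set Y) := by
          intro y hy
          show mY.incl y ∈ P
          exact hsub (hK'le ⟨y, hy, rfl⟩)
        have hQE : Submodule.comap (mY.incl.toNonUnitalAlgHom.toLinearMap) P ∈ E := by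
          rw [← hKE]; exact ⟨hQprim, hKQ⟩
        have hkQ : k ≤ Submodule.comap (mY.incl.toNonUnitalAlgHom.toLinearMap) P :=
          sInf_le hQE
        have hk'P : (k' : Set X) ⊆ (P : Set X) := by
          rintro _ ⟨y, hy, rfl⟩
          exact hkQ hy
        intro x hx
        have hx1 := (Submodule.mem_inf.1 hx).1
        refine mem_primitive_of_sandwich J hJ.2.1 hJ.2.2 hP hJP x ?_
        intro a haJ b hbJ
        exact hk'P (hx1 a haJ b hbJ)
  set F := hullOf X (Kst : Set X) with hFdef
  have hFhk : IsHkClosed X F := hullOf_hkClosed _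
  have hKst_eq : Kst = kernelOf X F := hss F hFhk Kst hKstclosed rfl
  have hkst_eq : kst = kernelOf X F := hss F hFhk kst hkstclosed hhull_eq
  set S3 := {t : X | ∃ x₁ ∈ Kst, ∃ x₂ ∈ Kst, ∃ x₃ ∈ Kst, t = x₁ * x₂ * x₃} with hS3
  set T := (Submodule.span ℂ S3).topologicalClosure with hTdef
  have hTclosedIdeal : IsClosedIdeal X T := by
    refine ⟨Submodule.isClosed_topologicalClosure _, ?_, ?_⟩
    · intro x y hy
      refine closure_span_stable (LinearMap.mulLeft ℂ x)
        (continuous_const.mul continuous_id) S3 ?_ y hy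
      rintro _ ⟨x₁, h₁, x₂, h₂, x₃, h₃, rfl⟩
      refine Submodule.subset_span ⟨x * x₁, hKstclosed.2.1 x x₁ h₁, x₂, h₂, x₃, h₃, ?_⟩
      show x * (x₁ * x₂ * x₃) = x * x₁ * x₂ * x₃
      simp only [mul_assoc]
    · intro x y hy
      refine closure_span_stable (LinearMap.mulRight ℂ x)
        (continuous_id.mul continuous_const) S3 ?_ y hy
      rintro _ ⟨x₁, h₁, x₂, h₂, x₃, h₃, rfl⟩
      refine Submodule.subset_span ⟨x₁, h₁, x₂, h₂, x₃ * x, hKstclosed.2.2 x x₃ h₃, ?_⟩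
      show x₁ * x₂ * x₃ * x = x₁ * x₂ * (x₃ * x)
      simp only [mul_assoc]
  have hhullT : hullOf X (T : Set X) = F := by
    ext P
    constructor
    · rintro ⟨hP, hsub⟩
      refine ⟨hP, ?_⟩
      refine subset_primitive_of_triple hP Kst hKstclosed.2.2 ?_
      intro i₁ h₁ i₂ h₂ i₃ h₃
      have h4 : i₁ * i₂ * i₃ ∈ T := Submodule.le_topologicalClosure _
        (Submodule.subset_span ⟨i₁, h₁, i₂, h₂, i₃, h₃, rfl⟩)
      exact hsub h4
    · rintro ⟨hP, hsub⟩
      refine ⟨hP, ?_⟩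
      have hPclosed := isPrimitiveIdeal_isClosed hP
      have hPideal := isPrimitiveIdeal_isClosedIdeal hP
      have hgen : S3 ⊆ (P : Set X) := by
        rintro _ ⟨x₁, h₁, x₂, h₂, x₃, h₃, rfl⟩
        have hx₁P : x₁ ∈ P := hsub h₁
        have h5 : x₁ * x₂ ∈ P := hPideal.2.2 x₂ x₁ hx₁P
        exact hPideal.2.2 x₃ _ h5
      have h6 : (Submodule.span ℂ S3).topologicalClosure ≤ P :=
        Submodule.topologicalClosure_minimal _ (Submodule.span_le.2 hgen) hPclosed
      exact fun x hx => h6 hx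
  have hT_eq : T = kernelOf X F := hss F hFhk T hTclosedIdeal hhullT
  have hTleK' : T ≤ K' := by
    refine Submodule.topologicalClosure_minimal _ (Submodule.span_le.2 ?_) hK'closed
    rintro _ ⟨x₁, h₁, x₂, h₂, x₃, h₃, rfl⟩
    obtain ⟨he₁, hJ₁⟩ := Submodule.mem_inf.1 h₁
    obtain ⟨he₂, hJ₂⟩ := Submodule.mem_inf.1 h₂
    obtain ⟨he₃, hJ₃⟩ := Submodule.mem_inf.1 h₃
    exact he₂ x₁ hJ₁ x₃ hJ₃
  have hk'leK' : k' ≤ K' := by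
    calc k' ≤ kst := hk'le
      _ = T := hkst_eq.trans hT_eq.symm
      _ ≤ K' := hTleK'
  have hkK : k ≤ K := by
    intro y hy
    have h1 : mY.incl y ∈ K' := hk'leK' ⟨y, hy, rfl⟩
    obtain ⟨y', hy', he⟩ := h1
    have h2 : y' = y := hιinj he
    rw [← h2]
    exact hy'
  exact le_antisymm hKk hkK

end Stmt8Ideal

/- STATEMENT 8 -/
theorem spectralSynthesis_ideal_and_quotient_of_spectralSynthesis
    (X : Type) [NonUnitalNormedRing X] [StarRing X] [NormedSpace ℂ X] [CompleteSpace X]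
    [IsScalarTower ℂ X X] [SMulCommClass ℂ X X] [StarModule ℂ X] [NormedStarGroup X]
    (hWX : WienerProperty X)
    (J : Submodule ℂ X) (hJ : IsClosedIdeal X J) (hJstar : IsStarIdeal X J)
    (Y : Type) [NonUnitalNormedRing Y] [StarRing Y] [NormedSpace ℂ Y] [CompleteSpace Y]
    [IsScalarTower ℂ Y Y] [SMulCommClass ℂ Y Y] [StarModule ℂ Y] [NormedStarGroup Y]
    (mY : SubalgebraModel X J Y) (hWY : WienerProperty Y)
    (Z : Type) [NonUnitalNormedRing Z] [StarRing Z] [NormedSpace ℂ Z] [CompleteSpace Z]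
    [IsScalarTower ℂ Z Z] [SMulCommClass ℂ Z Z] [StarModule ℂ Z] [NormedStarGroup Z]
    (mZ : QuotientModel X J Z)
    (hss : HasSpectralSynthesis X) :
    HasSpectralSynthesis Y ∧ HasSpectralSynthesis Z :=
  ⟨ideal_hasSpectralSynthesis X J Y mY hJ hss,
   quotient_hasSpectralSynthesis X J Z mZ hss⟩
end

section
/- Let A and B be C*-algebras and let J and K be closed ideals of A⊗̂B. Then: (a) if J ⊆ K then J_l ⊆ K_l and J^u ⊆ K^u; (b) if J_l or K_l has a bounded approximate identity, then (JK)_l = J_l K_l = J_l ∩ K_l = (J∩K)_l; (c) (J∩K)^u ⊆ J^u ∩ K^u, with equality if J = J^u and K = K^u. -/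
open scoped TensorProduct


section Helpers15

variable {A B : Type} [NonUnitalCStarAlgebra A] [NonUnitalCStarAlgebra B]
variable {X : Type} [NonUnitalNormedRing X] [StarRing X] [NormedSpace ℂ X] [CompleteSpace X]
variable [IsScalarTower ℂ X X] [SMulCommClass ℂ X X]

/-- The generating set of `lowerIdeal P J`. -/
def genSet15 (P : OSProjTensorProduct A B X) (J : Submodule ℂ X) : Set X :=
  {x : X | x ∈ J ∧ ∃ (a : A) (b : B), x = P.emb (a ⊗ₜ[ℂ] b)}

theorem lowerIdeal_eq15 (P : OSProjTensorProduct A B X) (J : Submodule ℂ X) :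
    lowerIdeal P J = (Submodule.span ℂ (genSet15 P J)).topologicalClosure := rfl

theorem lowerIdeal_mono15 (P : OSProjTensorProduct A B X) {J K : Submodule ℂ X} (h : J ≤ K) :
    lowerIdeal P J ≤ lowerIdeal P K :=
  Submodule.topologicalClosure_mono (Submodule.span_mono fun x hx => ⟨h hx.1, hx.2⟩)

theorem mul_mem_of_genSet15 (P : OSProjTensorProduct A B X) (J K : Submodule ℂ X)
    (T : Submodule ℂ X) (hT : IsClosed (T : Set X))
    (hgen : ∀ x ∈ genSet15 P J, ∀ y ∈ genSet15 P K, x * y ∈ T) :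
    ∀ x ∈ lowerIdeal P J, ∀ y ∈ lowerIdeal P K, x * y ∈ T := by
  have hspan : ∀ x ∈ Submodule.span ℂ (genSet15 P J), ∀ y ∈ Submodule.span ℂ (genSet15 P K),
      x * y ∈ T := by
    intro x hx
    induction hx using Submodule.span_induction with
    | mem x hxm =>
      intro y hy
      induction hy using Submodule.span_induction with
      | mem y hym => exact hgen _ hxm _ hym
      | zero => simpa using T.zero_mem
      | add y z _ _ hy hz => rw [mul_add]; exact T.add_mem hy hz
      | smul c y _ hy => rw [mul_smul_comm]; exact T.smul_mem c hy
    | zero => intro y _; simpa using T.zero_mem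
    | add a b _ _ ha hb => intro y hy; rw [add_mul]; exact T.add_mem (ha y hy) (hb y hy)
    | smul c a _ ha => intro y hy; rw [smul_mul_assoc]; exact T.smul_mem c (ha y hy)
  intro x hx y hy
  have hx' : x ∈ closure ((Submodule.span ℂ (genSet15 P J) : Set X)) := hx
  have hy' : y ∈ closure ((Submodule.span ℂ (genSet15 P K) : Set X)) := hy
  have := map_mem_closure₂ (f := fun a b : X => a * b) continuous_mul hx' hy' hspan
  rwa [hT.closure_eq] at this

theorem mul_mem_lowerIdeal_right15 (P : OSProjTensorProduct A B X) {J : Submodule ℂ X}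
    (hJ : IsClosedIdeal X J) :
    ∀ x ∈ lowerIdeal P J, ∀ y : X, x * y ∈ lowerIdeal P J := by
  have step1 : ∀ x ∈ genSet15 P J, ∀ u : A ⊗[ℂ] B, x * P.emb u ∈ lowerIdeal P J := by
    rintro x ⟨hxJ, a, b, rfl⟩ u
    induction u with
    | zero => simpa using (lowerIdeal P J).zero_mem
    | tmul c d =>
      have hm : P.emb (a ⊗ₜ[ℂ] b) * P.emb (c ⊗ₜ[ℂ] d) ∈ J :=
        hJ.2.2 (P.emb (c ⊗ₜ[ℂ] d)) _ hxJ
      rw [P.mul_emb] at hm ⊢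
      exact Submodule.le_topologicalClosure _ (Submodule.subset_span ⟨hm, _, _, rfl⟩)
    | add u v hu hv => rw [map_add, mul_add]; exact (lowerIdeal P J).add_mem hu hv
  have step2 : ∀ x ∈ genSet15 P J, ∀ y : X, x * y ∈ lowerIdeal P J := by
    intro x hx y
    have hy : y ∈ closure (Set.range fun u : A ⊗[ℂ] B => P.emb u) := P.dense_range y
    have := map_mem_closure (continuous_mul_left x) hy
      (fun z hz => by obtain ⟨u, rfl⟩ := hz; exact step1 x hx u)
    have hcl : IsClosed ((lowerIdeal P J : Set X)) := Submodule.isClosed_topologicalClosure _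
    rwa [hcl.closure_eq] at this
  have step3 : ∀ x ∈ Submodule.span ℂ (genSet15 P J), ∀ y : X, x * y ∈ lowerIdeal P J := by
    intro x hx
    induction hx using Submodule.span_induction with
    | mem x hxm => exact step2 x hxm
    | zero => intro y; simpa using (lowerIdeal P J).zero_mem
    | add a b _ _ ha hb => intro y; rw [add_mul]; exact (lowerIdeal P J).add_mem (ha y) (hb y)
    | smul c a _ ha => intro y; rw [smul_mul_assoc]; exact (lowerIdeal P J).smul_mem c (ha y)
  intro x hx y
  have hx' : x ∈ closure ((Submodule.span ℂ (genSet15 P J) : Set X)) := hx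
  have := map_mem_closure (continuous_mul_right y) hx' (fun a ha => step3 a ha y)
  have hcl : IsClosed ((lowerIdeal P J : Set X)) := Submodule.isClosed_topologicalClosure _
  rwa [hcl.closure_eq] at this

theorem mul_mem_lowerIdeal_left15 (P : OSProjTensorProduct A B X) {K : Submodule ℂ X}
    (hK : IsClosedIdeal X K) :
    ∀ y ∈ lowerIdeal P K, ∀ x : X, x * y ∈ lowerIdeal P K := by
  have step1 : ∀ y ∈ genSet15 P K, ∀ u : A ⊗[ℂ] B, P.emb u * y ∈ lowerIdeal P K := by
    rintro y ⟨hyK, a, b, rfl⟩ u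
    induction u with
    | zero => simpa using (lowerIdeal P K).zero_mem
    | tmul c d =>
      have hm : P.emb (c ⊗ₜ[ℂ] d) * P.emb (a ⊗ₜ[ℂ] b) ∈ K :=
        hK.2.1 (P.emb (c ⊗ₜ[ℂ] d)) _ hyK
      rw [P.mul_emb] at hm ⊢
      exact Submodule.le_topologicalClosure _ (Submodule.subset_span ⟨hm, _, _, rfl⟩)
    | add u v hu hv => rw [map_add, add_mul]; exact (lowerIdeal P K).add_mem hu hv
  have step2 : ∀ y ∈ genSet15 P K, ∀ x : X, x * y ∈ lowerIdeal P K := by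
    intro y hy x
    have hx : x ∈ closure (Set.range fun u : A ⊗[ℂ] B => P.emb u) := P.dense_range x
    have := map_mem_closure (continuous_mul_right y) hx
      (fun z hz => by obtain ⟨u, rfl⟩ := hz; exact step1 y hy u)
    have hcl : IsClosed ((lowerIdeal P K : Set X)) := Submodule.isClosed_topologicalClosure _
    rwa [hcl.closure_eq] at this
  have step3 : ∀ y ∈ Submodule.span ℂ (genSet15 P K), ∀ x : X, x * y ∈ lowerIdeal P K := by
    intro y hy
    induction hy using Submodule.span_induction with
    | mem y hym => exact step2 y hym
    | zero => intro x; simpa using (lowerIdeal P K).zero_mem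
    | add a b _ _ ha hb => intro x; rw [mul_add]; exact (lowerIdeal P K).add_mem (ha x) (hb x)
    | smul c a _ ha => intro x; rw [mul_smul_comm]; exact (lowerIdeal P K).smul_mem c (ha x)
  intro y hy x
  have hy' : y ∈ closure ((Submodule.span ℂ (genSet15 P K) : Set X)) := hy
  have := map_mem_closure (continuous_mul_left x) hy' (fun a ha => step3 a ha x)
  have hcl : IsClosed ((lowerIdeal P K : Set X)) := Submodule.isClosed_topologicalClosure _
  rwa [hcl.closure_eq] at this

end Helpers15

/- STATEMENT 15 -/
theorem lower_upper_ideal_properties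
    (A B : Type) [NonUnitalCStarAlgebra A] [NonUnitalCStarAlgebra B]
    (X : Type) [NonUnitalNormedRing X] [StarRing X] [NormedSpace ℂ X] [CompleteSpace X]
    [IsScalarTower ℂ X X] [SMulCommClass ℂ X X] [StarModule ℂ X] [NormedStarGroup X]
    (Y : Type) [NonUnitalCStarAlgebra Y]
    (P : OSProjTensorProduct A B X) (Mn : MinTensorProduct A B Y)
    (i : X →L[ℂ] Y) (hi : IsCanonicalInclusion P Mn i)
    (J K : Submodule ℂ X) (hJ : IsClosedIdeal X J) (hK : IsClosedIdeal X K) :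
    (J ≤ K → lowerIdeal P J ≤ lowerIdeal P K ∧ upperIdeal i J ≤ upperIdeal i K) ∧
      ((HasBoundedApproxIdentity X (lowerIdeal P J) ∨
          HasBoundedApproxIdentity X (lowerIdeal P K)) →
        lowerIdeal P (mulIdeal X J K) = mulIdeal X (lowerIdeal P J) (lowerIdeal P K) ∧
          mulIdeal X (lowerIdeal P J) (lowerIdeal P K) = lowerIdeal P J ⊓ lowerIdeal P K ∧
          lowerIdeal P J ⊓ lowerIdeal P K = lowerIdeal P (J ⊓ K)) ∧
      (upperIdeal i (J ⊓ K) ≤ upperIdeal i J ⊓ upperIdeal i K ∧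
        (J = upperIdeal i J → K = upperIdeal i K →
          upperIdeal i (J ⊓ K) = upperIdeal i J ⊓ upperIdeal i K)) := by
  have lower_mono : ∀ {N N' : Submodule ℂ X}, N ≤ N' → lowerIdeal P N ≤ lowerIdeal P N' :=
    fun h => lowerIdeal_mono15 P h
  have upper_mono : ∀ {N N' : Submodule ℂ X}, N ≤ N' → upperIdeal i N ≤ upperIdeal i N' :=
    fun h => Submodule.comap_mono (Submodule.topologicalClosure_mono (Submodule.map_mono h))
  have le_upper : ∀ N : Submodule ℂ X, N ≤ upperIdeal i N := fun N x hx =>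
    Submodule.mem_comap.2
      (Submodule.le_topologicalClosure _ (Submodule.mem_map_of_mem hx))
  refine ⟨fun h => ⟨lower_mono h, upper_mono h⟩, ?_, ?_⟩
  · intro hBAI
    have habsJ := mul_mem_lowerIdeal_right15 P hJ
    have habsK := mul_mem_lowerIdeal_left15 P hK
    -- claim2
    have h2le : mulIdeal X (lowerIdeal P J) (lowerIdeal P K) ≤
        lowerIdeal P J ⊓ lowerIdeal P K := by
      refine Submodule.topologicalClosure_minimal _ ?_ ?_
      · rw [Submodule.span_le]
        rintro z ⟨x, hx, y, hy, rfl⟩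
        exact Submodule.mem_inf.2 ⟨habsJ x hx y, habsK y hy x⟩
      · rw [Submodule.coe_inf]
        exact (Submodule.isClosed_topologicalClosure _).inter
          (Submodule.isClosed_topologicalClosure _)
    have h2ge : lowerIdeal P J ⊓ lowerIdeal P K ≤
        mulIdeal X (lowerIdeal P J) (lowerIdeal P K) := by
      intro z hz
      obtain ⟨hzJ, hzK⟩ := Submodule.mem_inf.1 hz
      have hclosed : IsClosed ((mulIdeal X (lowerIdeal P J) (lowerIdeal P K) : Set X)) :=
        Submodule.isClosed_topologicalClosure _
      rcases hBAI with ⟨ι, l, e, C, hne, hmem, happ⟩ | ⟨ι, l, e, C, hne, hmem, happ⟩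
      · haveI := hne
        exact hclosed.mem_of_tendsto (happ z hzJ).1 (Filter.Eventually.of_forall fun k =>
          Submodule.le_topologicalClosure _
            (Submodule.subset_span ⟨e k, (hmem k).1, z, hzK, rfl⟩))
      · haveI := hne
        exact hclosed.mem_of_tendsto (happ z hzK).2 (Filter.Eventually.of_forall fun k =>
          Submodule.le_topologicalClosure _
            (Submodule.subset_span ⟨z, hzJ, e k, (hmem k).1, rfl⟩))
    -- claim3
    have hmul_inf : ∀ x ∈ lowerIdeal P J, ∀ y ∈ lowerIdeal P K,
        x * y ∈ lowerIdeal P (J ⊓ K) := by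
      refine mul_mem_of_genSet15 P J K _ (Submodule.isClosed_topologicalClosure _) ?_
      rintro x ⟨hxJ, a, b, rfl⟩ y ⟨hyK, c, d, rfl⟩
      have hmJ : P.emb (a ⊗ₜ[ℂ] b) * P.emb (c ⊗ₜ[ℂ] d) ∈ J := hJ.2.2 _ _ hxJ
      have hmK : P.emb (a ⊗ₜ[ℂ] b) * P.emb (c ⊗ₜ[ℂ] d) ∈ K := hK.2.1 _ _ hyK
      rw [P.mul_emb] at hmJ hmK ⊢
      exact Submodule.le_topologicalClosure _
        (Submodule.subset_span ⟨Submodule.mem_inf.2 ⟨hmJ, hmK⟩, _, _, rfl⟩)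
    have h3le : lowerIdeal P J ⊓ lowerIdeal P K ≤ lowerIdeal P (J ⊓ K) := by
      refine h2ge.trans (Submodule.topologicalClosure_minimal _ ?_
        (Submodule.isClosed_topologicalClosure _))
      rw [Submodule.span_le]
      rintro z ⟨x, hx, y, hy, rfl⟩
      exact hmul_inf x hx y hy
    have h3ge : lowerIdeal P (J ⊓ K) ≤ lowerIdeal P J ⊓ lowerIdeal P K :=
      le_inf (lower_mono inf_le_left) (lower_mono inf_le_right)
    -- claim1
    have hmul_JK : ∀ x ∈ lowerIdeal P J, ∀ y ∈ lowerIdeal P K,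
        x * y ∈ lowerIdeal P (mulIdeal X J K) := by
      refine mul_mem_of_genSet15 P J K _ (Submodule.isClosed_topologicalClosure _) ?_
      rintro x ⟨hxJ, a, b, rfl⟩ y ⟨hyK, c, d, rfl⟩
      have hm : P.emb (a ⊗ₜ[ℂ] b) * P.emb (c ⊗ₜ[ℂ] d) ∈ mulIdeal X J K :=
        Submodule.le_topologicalClosure _
          (Submodule.subset_span ⟨_, hxJ, _, hyK, rfl⟩)
      rw [P.mul_emb] at hm ⊢
      exact Submodule.le_topologicalClosure _ (Submodule.subset_span ⟨hm, _, _, rfl⟩)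
    have h1ge : mulIdeal X (lowerIdeal P J) (lowerIdeal P K) ≤
        lowerIdeal P (mulIdeal X J K) := by
      refine Submodule.topologicalClosure_minimal _ ?_
        (Submodule.isClosed_topologicalClosure _)
      rw [Submodule.span_le]
      rintro z ⟨x, hx, y, hy, rfl⟩
      exact hmul_JK x hx y hy
    have hJKle : mulIdeal X J K ≤ J ⊓ K := by
      refine Submodule.topologicalClosure_minimal _ ?_ ?_
      · rw [Submodule.span_le]
        rintro z ⟨x, hx, y, hy, rfl⟩
        exact Submodule.mem_inf.2 ⟨hJ.2.2 y x hx, hK.2.1 x y hy⟩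
      · rw [Submodule.coe_inf]
        exact hJ.1.inter hK.1
    have h1le : lowerIdeal P (mulIdeal X J K) ≤
        mulIdeal X (lowerIdeal P J) (lowerIdeal P K) :=
      (lower_mono hJKle).trans (h3ge.trans h2ge)
    exact ⟨le_antisymm h1le h1ge, le_antisymm h2le h2ge, le_antisymm h3le h3ge⟩
  · refine ⟨le_inf (upper_mono inf_le_left) (upper_mono inf_le_right), ?_⟩
    intro hJu hKu
    refine le_antisymm (le_inf (upper_mono inf_le_left) (upper_mono inf_le_right)) ?_
    calc upperIdeal i J ⊓ upperIdeal i K = J ⊓ K := by rw [← hJu, ← hKu]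
      _ ≤ upperIdeal i (J ⊓ K) := le_upper _
end
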